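/- Let S be a finite set with |S| = n ≥ 2. For all nondegenerate hierarchies 𝒜, ℬ over S, the closed-form NNI navigation distance satisfies d_Nav(𝒜,ℬ) ≤ (1/2)(n−1)(n−2), and there exists a pair of nondegenerate hierarchies over S attaining this value; that is, the diameter of the set of nondegenerate hierarchies over S in d_Nav equals (1/2)(n−1)(n−2). -/

import Mathlib

open scoped Classical
set_option linter.unusedSectionVars false

namespace TreeDist

variable {α : Type*} [DecidableEq α]

/-- Two finite sets are compatible if they are disjoint or nested. -/
def Compatible (A B : Finset α) : Prop :=
  A ∩ B = ∅ ∨ A ⊆ B ∨ B ⊆ A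

/-- A hierarchy over `S`: a laminar family of nonempty subsets of `S`
containing `S` and all singletons. -/
def IsHierarchy (S : Finset α) (F : Finset (Finset α)) : Prop :=
  (∀ A ∈ F, A ⊆ S ∧ A.Nonempty) ∧
  (∀ A ∈ F, ∀ B ∈ F, Compatible A B) ∧
  S ∈ F ∧ ∀ i ∈ S, ({i} : Finset α) ∈ F

/-- A nondegenerate (binary) hierarchy: a hierarchy with `2|S| - 1` clusters,
equivalently a maximal laminar family. -/
def Nondeg (S : Finset α) (F : Finset (Finset α)) : Prop :=
  IsHierarchy S F ∧ F.card = 2 * S.card - 1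

/-- `P` is the parent of `I` in the family `F`: the smallest cluster of `F`
strictly containing `I`. -/
def IsParent (F : Finset (Finset α)) (I P : Finset α) : Prop :=
  P ∈ F ∧ I ⊂ P ∧ ∀ Q ∈ F, I ⊂ Q → P ⊆ Q

/-- `G` is the result of an NNI move on `F` at some grandchild `C`:
`G = (F \ {parent C}) ∪ {grandparent C \ C}`. -/
def IsNNIMove (F G : Finset (Finset α)) : Prop :=
  ∃ C P GP, C ∈ F ∧ IsParent F C P ∧ IsParent F P GP ∧
    G = insert (GP \ C) (F.erase P)

/-- Restriction of a family of sets to `K`: `{A ∩ K : A ∈ F, A ∩ K ≠ ∅}`. -/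
noncomputable def restrictFam (F : Finset (Finset α)) (K : Finset α) : Finset (Finset α) :=
  (F.image (· ∩ K)).filter fun A => A.Nonempty

/-- The cardinality of the smallest common ancestor of `i` and `j` in `F`, i.e. the
minimum cardinality of a cluster of `F` containing both `i` and `j`. -/
noncomputable def caCard (F : Finset (Finset α)) (i j : α) : ℕ :=
  sInf {n | ∃ A ∈ F, i ∈ A ∧ j ∈ A ∧ A.card = n}

/-- Ultrametric representation `U(F)_{ij} = |ca(i,j)| - 1`. -/
noncomputable def Umat (F : Finset (Finset α)) (i j : α) : ℤ :=
  (caCard F i j : ℤ) - 1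

/-- Cluster-cardinality distance `d_CC = (1/2) Σ_{i,j ∈ S} |U(F)_{ij} - U(G)_{ij}|`. -/
noncomputable def dCC (S : Finset α) (F G : Finset (Finset α)) : ℚ :=
  (1 / 2) * ∑ i ∈ S, ∑ j ∈ S, |((Umat F i j : ℚ)) - ((Umat G i j : ℚ))|

/-- Robinson–Foulds distance: half the size of the symmetric difference of cluster sets. -/
noncomputable def dRF (F G : Finset (Finset α)) : ℚ :=
  (((F \ G) ∪ (G \ F)).card : ℚ) / 2

/-- Crossing dissimilarity: the number of incompatible pairs of clusters. -/
noncomputable def dCM (F G : Finset (Finset α)) : ℕ :=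
  ((F ×ˢ G).filter fun p => ¬ Compatible p.1 p.2).card

/-- Depth of a cluster: the number of its strict ancestors in `F`. -/
noncomputable def depth (F : Finset (Finset α)) (I : Finset α) : ℕ :=
  (F.filter fun J => I ⊂ J).card

/-- The children of `I` in `F`: the clusters of `F` whose parent is `I`. -/
noncomputable def children (F : Finset (Finset α)) (I : Finset α) : Finset (Finset α) :=
  F.filter fun C => IsParent F C I

/-- `η_{F,G}(I,J)`: the number of members of `(children I)|_J` incompatible with
the family `(children J)|_I`. -/
noncomputable def eta (F G : Finset (Finset α)) (I J : Finset α) : ℕ :=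
  ((restrictFam (children F I) J).filter
    fun A => ∃ B ∈ restrictFam (children G J) I, ¬ Compatible A B).card

/-- `θ(x) = (x² + x)/2`. -/
def theta (x : ℕ) : ℚ := ((x : ℚ) ^ 2 + x) / 2

/-- Closed-form NNI navigation distance `d_Nav(F,G) = Σ_{I∈F, J∈G} θ(η_{F,G}(I,J))`. -/
noncomputable def dNav (F G : Finset (Finset α)) : ℚ :=
  ∑ I ∈ F, ∑ J ∈ G, theta (eta F G I J)



/-! ### Basic lemmas -/

lemma compatible_comm {A B : Finset α} (h : Compatible A B) : Compatible B A := by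
  rcases h with h | h | h
  · left; rw [Finset.inter_comm]; exact h
  · right; right; exact h
  · right; left; exact h

lemma singleton_compatible (x : α) (B : Finset α) : Compatible {x} B := by
  by_cases hx : x ∈ B
  · right; left; simpa using hx
  · left; ext y; simp; rintro rfl; exact hx

lemma compatible_singleton (B : Finset α) (x : α) : Compatible B {x} :=
  compatible_comm (singleton_compatible x B)

lemma not_compatible_iff {A B : Finset α} :
    ¬ Compatible A B ↔ (A ∩ B).Nonempty ∧ ¬ A ⊆ B ∧ ¬ B ⊆ A := by
  unfold Compatible
  rw [Finset.nonempty_iff_ne_empty]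
  tauto

/-- Members of a hierarchy containing a common point are nested. -/
lemma nested_of_mem_inter {S : Finset α} {F : Finset (Finset α)} (hF : IsHierarchy S F)
    {A B : Finset α} (hA : A ∈ F) (hB : B ∈ F) {x : α} (hxA : x ∈ A) (hxB : x ∈ B) :
    A ⊆ B ∨ B ⊆ A := by
  rcases hF.2.1 A hA B hB with h | h | h
  · exfalso
    have : x ∈ A ∩ B := Finset.mem_inter.2 ⟨hxA, hxB⟩
    rw [h] at this; simp at this
  · exact Or.inl h
  · exact Or.inr h

/-- Every non-root cluster has a parent. -/
lemma exists_parent {S : Finset α} {F : Finset (Finset α)} (hF : IsHierarchy S F)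
    {C : Finset α} (hC : C ∈ F) (hne : C ≠ S) : ∃ P, IsParent F C P := by
  classical
  set T := F.filter (fun Q => C ⊂ Q) with hT
  have hS : S ∈ T := by
    refine Finset.mem_filter.2 ⟨hF.2.2.1, ?_⟩
    exact (Finset.ssubset_iff_subset_ne).2 ⟨(hF.1 C hC).1, hne⟩
  obtain ⟨P, hPT, hPmin⟩ := T.exists_min_image (fun Q => Q.card) ⟨S, hS⟩
  rw [Finset.mem_filter] at hPT
  refine ⟨P, hPT.1, hPT.2, ?_⟩
  intro Q hQ hCQ
  have hQT : Q ∈ T := Finset.mem_filter.2 ⟨hQ, hCQ⟩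
  obtain ⟨x, hx⟩ := (hF.1 C hC).2
  have := nested_of_mem_inter hF hPT.1 hQ (hPT.2.1 hx) (hCQ.1 hx)
  rcases this with h | h
  · exact h
  · have := hPmin Q hQT
    have hQP : Q = P := Finset.eq_of_subset_of_card_le h this
    rw [hQP]

lemma parent_unique {F : Finset (Finset α)} {C P P' : Finset α}
    (h : IsParent F C P) (h' : IsParent F C P') : P = P' :=
  Finset.Subset.antisymm (h.2.2 P' h'.1 h'.2.1) (h'.2.2 P h.1 h.2.1)

lemma mem_children_iff {F : Finset (Finset α)} {I C : Finset α} :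
    C ∈ children F I ↔ C ∈ F ∧ IsParent F C I := by
  unfold children; rw [Finset.mem_filter]

/-- Children of a cluster are pairwise disjoint. -/
lemma children_disjoint {S : Finset α} {F : Finset (Finset α)} (hF : IsHierarchy S F)
    {I C C' : Finset α} (hC : C ∈ children F I) (hC' : C' ∈ children F I) (hne : C ≠ C') :
    C ∩ C' = ∅ := by
  rw [mem_children_iff] at hC hC'
  rcases hF.2.1 C hC.1 C' hC'.1 with h | h | h
  · exact h
  · have hss : C ⊂ C' := Finset.ssubset_iff_subset_ne.2 ⟨h, hne⟩
    have hIC' : I ⊆ C' := hC.2.2.2 C' hC'.1 hss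
    exact absurd hIC' hC'.2.2.1.not_subset
  · have hss : C' ⊂ C := Finset.ssubset_iff_subset_ne.2 ⟨h, hne.symm⟩
    have hIC : I ⊆ C := hC'.2.2.2 C hC.1 hss
    exact absurd hIC hC.2.2.1.not_subset

/-- Each point of a non-singleton cluster lies in some child. -/
lemma exists_child_mem {S : Finset α} {F : Finset (Finset α)} (hF : IsHierarchy S F)
    {I : Finset α} (hI : I ∈ F) {x : α} (hx : x ∈ I) (hne : ({x} : Finset α) ≠ I) :
    ∃ C, C ∈ children F I ∧ x ∈ C := by
  classical
  set T := F.filter (fun Q => x ∈ Q ∧ Q ⊂ I) with hT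
  have hxS : x ∈ S := (hF.1 I hI).1 hx
  have hxT : ({x} : Finset α) ∈ T := by
    refine Finset.mem_filter.2 ⟨hF.2.2.2 x hxS, by simp, ?_⟩
    exact Finset.ssubset_iff_subset_ne.2 ⟨Finset.singleton_subset_iff.2 hx, hne⟩
  obtain ⟨C, hCT, hCmax⟩ := T.exists_max_image (fun Q => Q.card) ⟨_, hxT⟩
  rw [Finset.mem_filter] at hCT
  refine ⟨C, mem_children_iff.2 ⟨hCT.1, hI, hCT.2.2, ?_⟩, hCT.2.1⟩
  intro Q hQ hCQ
  have hxQ : x ∈ Q := hCQ.subset hCT.2.1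
  rcases nested_of_mem_inter hF hQ hI hxQ hx with h | h
  · rcases eq_or_ne Q I with h' | h'
    · rw [h']
    · exfalso
      have hQT : Q ∈ T := Finset.mem_filter.2 ⟨hQ, hxQ, Finset.ssubset_iff_subset_ne.2 ⟨h, h'⟩⟩
      have := hCmax Q hQT
      exact absurd (Finset.card_lt_card hCQ) (by omega)
  · exact h

/-- Singletons have no children. -/
lemma children_singleton_empty {S : Finset α} {F : Finset (Finset α)} (hF : IsHierarchy S F)
    {I : Finset α} (hI : I.card = 1) : children F I = ∅ := by
  rw [Finset.eq_empty_iff_forall_notMem]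
  intro C hC
  rw [mem_children_iff] at hC
  have h1 : C.Nonempty := (hF.1 C hC.1).2
  have h2 : C ⊂ I := hC.2.2.1
  have := Finset.card_lt_card h2
  have := Finset.card_pos.2 h1
  omega

/-! ### Binary structure of nondegenerate hierarchies -/

lemma erase_root_eq_biUnion {S : Finset α} {F : Finset (Finset α)} (hF : IsHierarchy S F) :
    F.erase S = F.biUnion (fun I => children F I) := by
  classical
  ext C
  rw [Finset.mem_erase, Finset.mem_biUnion]
  constructor
  · rintro ⟨hne, hCF⟩
    obtain ⟨P, hP⟩ := exists_parent hF hCF hne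
    exact ⟨P, hP.1, mem_children_iff.2 ⟨hCF, hP⟩⟩
  · rintro ⟨I, hIF, hCI⟩
    rw [mem_children_iff] at hCI
    refine ⟨?_, hCI.1⟩
    intro h
    have h1 : I ⊆ S := (hF.1 I hIF).1
    exact (h ▸ hCI.2.2.1).not_subset h1

lemma sum_children_card {S : Finset α} {F : Finset (Finset α)} (hF : IsHierarchy S F) :
    ∑ I ∈ F, (children F I).card = F.card - 1 := by
  classical
  have hdisj : ∀ I ∈ F, ∀ I' ∈ F, I ≠ I' →
      Disjoint (children F I) (children F I') := by
    intro I hI I' hI' hne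
    rw [Finset.disjoint_left]
    intro C hC hC'
    rw [mem_children_iff] at hC hC'
    exact hne (parent_unique hC.2 hC'.2)
  have hcard := Finset.card_biUnion hdisj
  rw [← erase_root_eq_biUnion hF] at hcard
  rw [← hcard, Finset.card_erase_of_mem hF.2.2.1]

lemma card_singletons {S : Finset α} {F : Finset (Finset α)} (hF : IsHierarchy S F) :
    (F.filter (fun A => A.card = 1)).card = S.card := by
  classical
  have himg : F.filter (fun A => A.card = 1) = S.image (fun i => ({i} : Finset α)) := by
    ext A
    rw [Finset.mem_filter, Finset.mem_image]
    constructor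
    · rintro ⟨hA, hc⟩
      obtain ⟨x, rfl⟩ := Finset.card_eq_one.1 hc
      exact ⟨x, (hF.1 _ hA).1 (Finset.mem_singleton_self x), rfl⟩
    · rintro ⟨i, hi, rfl⟩
      exact ⟨hF.2.2.2 i hi, Finset.card_singleton i⟩
  rw [himg, Finset.card_image_of_injective _ (fun a b h => by

    simpa using h)]

lemma two_le_card_children {S : Finset α} {F : Finset (Finset α)} (hF : IsHierarchy S F)
    {I : Finset α} (hI : I ∈ F) (h2 : 2 ≤ I.card) : 2 ≤ (children F I).card := by
  classical
  obtain ⟨x, hx⟩ := Finset.card_pos.1 (by omega : 0 < I.card)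
  have hsne : ∀ y ∈ I, ({y} : Finset α) ≠ I := by
    intro y _ h
    rw [← h] at h2
    simp at h2
  obtain ⟨C, hC, hxC⟩ := exists_child_mem hF hI hx (hsne x hx)
  have hCI : C ⊂ I := (mem_children_iff.1 hC).2.2.1
  obtain ⟨z, hzI, hzC⟩ := Finset.exists_of_ssubset hCI
  obtain ⟨C', hC', hzC'⟩ := exists_child_mem hF hI hzI (hsne z hzI)
  have : C ≠ C' := fun h => hzC (h ▸ hzC')
  exact Finset.one_lt_card.2 ⟨C, hC, C', hC', this⟩

lemma children_card_eq_two {S : Finset α} {F : Finset (Finset α)} (hF : Nondeg S F)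
    {I : Finset α} (hI : I ∈ F) (h2 : 2 ≤ I.card) : (children F I).card = 2 := by
  classical
  have hH := hF.1
  have hn1 : 1 ≤ S.card := Finset.card_pos.2 ((hH.1 S hH.2.2.1).2)
  set Sing := F.filter (fun A => A.card = 1) with hSing
  set Int := F.filter (fun A => ¬ A.card = 1) with hInt
  have hcardsum : Sing.card + Int.card = F.card := Finset.card_filter_add_card_filter_not _
  have hs : Sing.card = S.card := card_singletons hH
  have hIcard : Int.card = S.card - 1 := by
    have := hF.2
    omega
  have hsum : ∑ A ∈ F, (children F A).card = 2 * S.card - 2 := by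
    rw [sum_children_card hH, hF.2]
    omega
  have hsplit : ∑ A ∈ Sing, (children F A).card + ∑ A ∈ Int, (children F A).card
      = ∑ A ∈ F, (children F A).card := by
    rw [hSing, hInt, Finset.sum_filter_add_sum_filter_not]
  have hzero : ∑ A ∈ Sing, (children F A).card = 0 := by
    apply Finset.sum_eq_zero
    intro A hA
    rw [hSing, Finset.mem_filter] at hA
    rw [children_singleton_empty hH hA.2]
    rfl
  have hIsum : ∑ A ∈ Int, (children F A).card = 2 * Int.card := by
    rw [hIcard]
    omega
  have hge : ∀ A ∈ Int, 2 ≤ (children F A).card := by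
    intro A hA
    rw [hInt, Finset.mem_filter] at hA
    have h1 : A.Nonempty := (hH.1 A hA.1).2
    have : 2 ≤ A.card := by
      have := Finset.card_pos.2 h1
      omega
    exact two_le_card_children hH hA.1 this
  have hall : ∀ A ∈ Int, (children F A).card = 2 := by
    by_contra hcon
    push_neg at hcon
    obtain ⟨A, hA, hne⟩ := hcon
    have hlt : ∑ B ∈ Int, 2 < ∑ B ∈ Int, (children F B).card := by
      apply Finset.sum_lt_sum hge
      exact ⟨A, hA, lt_of_le_of_ne (hge A hA) (Ne.symm hne)⟩
    rw [Finset.sum_const, smul_eq_mul, hIsum] at hlt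
    omega
  apply hall
  rw [hInt, Finset.mem_filter]
  exact ⟨hI, by omega⟩

/-- A non-singleton cluster of a nondegenerate hierarchy has exactly two children,
which partition it. -/
lemma children_pair {S : Finset α} {F : Finset (Finset α)} (hF : Nondeg S F)
    {I : Finset α} (hI : I ∈ F) (h2 : 2 ≤ I.card) :
    ∃ C1 C2, children F I = {C1, C2} ∧ C1 ≠ C2 ∧ C1 ∩ C2 = ∅ ∧ C1 ∪ C2 = I := by
  classical
  obtain ⟨C1, C2, hne, hch⟩ := Finset.card_eq_two.1 (children_card_eq_two hF hI h2)
  have h1 : C1 ∈ children F I := by rw [hch]; simp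
  have h2' : C2 ∈ children F I := by rw [hch]; simp
  refine ⟨C1, C2, hch, hne, children_disjoint hF.1 h1 h2' hne, ?_⟩
  apply Finset.Subset.antisymm
  · apply Finset.union_subset
    · exact (mem_children_iff.1 h1).2.2.1.subset
    · exact (mem_children_iff.1 h2').2.2.1.subset
  · intro x hx
    have hsne : ({x} : Finset α) ≠ I := by
      intro h
      rw [← h] at h2
      simp at h2
    obtain ⟨C, hC, hxC⟩ := exists_child_mem hF.1 hI hx hsne
    rw [hch] at hC
    rcases Finset.mem_insert.1 hC with rfl | hC
    · exact Finset.mem_union_left _ hxC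
    · rw [Finset.mem_singleton] at hC
      subst hC
      exact Finset.mem_union_right _ hxC

/-! ### Characterization of η -/

lemma mem_restrictFam {F : Finset (Finset α)} {K A : Finset α} :
    A ∈ restrictFam F K ↔ A.Nonempty ∧ ∃ B ∈ F, B ∩ K = A := by
  unfold restrictFam
  rw [Finset.mem_filter, Finset.mem_image]
  tauto

lemma eta_zero_left {F G : Finset (Finset α)} {I J : Finset α}
    (h : children F I = ∅) : eta F G I J = 0 := by
  unfold eta restrictFam
  rw [h]
  simp

lemma eta_zero_right {F G : Finset (Finset α)} {I J : Finset α}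
    (h : children G J = ∅) : eta F G I J = 0 := by
  unfold eta
  rw [Finset.card_eq_zero, Finset.filter_eq_empty_iff]
  intro A _
  rintro ⟨B, hB, -⟩
  rw [h] at hB
  unfold restrictFam at hB
  simp at hB

/-- The key crossing equivalence. -/
lemma cross_iff {G : Finset (Finset α)} {I J C C' D1 D2 : Finset α}
    (hCu : C ∪ C' = I) (hCd : C ∩ C' = ∅)
    (hDch : children G J = {D1, D2}) (hDd : D1 ∩ D2 = ∅) (hDu : D1 ∪ D2 = J) :
    (∃ B ∈ restrictFam (children G J) I, ¬ Compatible (C ∩ J) B) ↔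
      ((C ∩ D1).Nonempty ∧ (C ∩ D2).Nonempty ∧ (C' ∩ J).Nonempty) := by
  have hCI : C ⊆ I := hCu ▸ Finset.subset_union_left
  have hD1J : D1 ⊆ J := hDu ▸ Finset.subset_union_left
  have hD2J : D2 ⊆ J := hDu ▸ Finset.subset_union_right
  constructor
  · rintro ⟨B, hB, hnc⟩
    rw [mem_restrictFam] at hB
    obtain ⟨hBne, D, hD, rfl⟩ := hB
    rw [hDch] at hD
    rw [not_compatible_iff] at hnc
    obtain ⟨hne0, hns1, hns2⟩ := hnc
    -- extract the witnesses
    obtain ⟨x, hx⟩ := hne0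
    rw [Finset.mem_inter, Finset.mem_inter, Finset.mem_inter] at hx
    -- x ∈ C, x ∈ J, x ∈ D, x ∈ I
    have hxC : x ∈ C := hx.1.1
    have hxD : x ∈ D := hx.2.1
    -- from ¬ (C ∩ J ⊆ D ∩ I), get y ∈ C ∩ J \ D
    obtain ⟨y, hyCJ, hyD⟩ := Finset.not_subset.1 hns1
    rw [Finset.mem_inter] at hyCJ
    have hyD' : y ∉ D := fun h => hyD (Finset.mem_inter.2 ⟨h, hCI hyCJ.1⟩)
    -- from ¬ (D ∩ I ⊆ C ∩ J), get z ∈ D ∩ I \ C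
    obtain ⟨z, hzDI, hzCJ⟩ := Finset.not_subset.1 hns2
    rw [Finset.mem_inter] at hzDI
    have hDcase : D = D1 ∨ D = D2 := by
      rcases Finset.mem_insert.1 hD with h | h
      · exact Or.inl h
      · exact Or.inr (Finset.mem_singleton.1 h)
    have hDJ : D ⊆ J := by
      rcases hDcase with h | h
      · rw [h]; exact hD1J
      · rw [h]; exact hD2J
    have hzC : z ∉ C := fun h => hzCJ (Finset.mem_inter.2 ⟨h, hDJ hzDI.1⟩)
    have hzC' : z ∈ C' := by
      have : z ∈ C ∪ C' := hCu.symm ▸ hzDI.2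
      rcases Finset.mem_union.1 this with h | h
      · exact absurd h hzC
      · exact h
    refine ⟨?_, ?_, ⟨z, Finset.mem_inter.2 ⟨hzC', hDJ hzDI.1⟩⟩⟩
    · rcases hDcase with h | h
      · rw [h] at hxD
        exact ⟨x, Finset.mem_inter.2 ⟨hxC, hxD⟩⟩
      · rw [h] at hyD'
        have hyJ : y ∈ D1 ∪ D2 := hDu.symm ▸ hyCJ.2
        rcases Finset.mem_union.1 hyJ with hh | hh
        · exact ⟨y, Finset.mem_inter.2 ⟨hyCJ.1, hh⟩⟩
        · exact absurd hh hyD'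
    · rcases hDcase with h | h
      · rw [h] at hyD'
        have hyJ : y ∈ D1 ∪ D2 := hDu.symm ▸ hyCJ.2
        rcases Finset.mem_union.1 hyJ with hh | hh
        · exact absurd hh hyD'
        · exact ⟨y, Finset.mem_inter.2 ⟨hyCJ.1, hh⟩⟩
      · rw [h] at hxD
        exact ⟨x, Finset.mem_inter.2 ⟨hxC, hxD⟩⟩
  · rintro ⟨h1, h2, h3⟩
    obtain ⟨y, hy⟩ := h3
    rw [Finset.mem_inter] at hy
    have hyI : y ∈ I := hCu ▸ Finset.mem_union_right _ hy.1
    have hyC : y ∉ C := by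
      intro h
      have : y ∈ C ∩ C' := Finset.mem_inter.2 ⟨h, hy.1⟩
      rw [hCd] at this
      simp at this
    have hyJ : y ∈ D1 ∪ D2 := hDu.symm ▸ hy.2
    -- choose the child containing y
    rcases Finset.mem_union.1 hyJ with hyD | hyD
    · -- use D1
      refine ⟨D1 ∩ I, ?_, ?_⟩
      · rw [mem_restrictFam]
        exact ⟨⟨y, Finset.mem_inter.2 ⟨hyD, hyI⟩⟩, D1, by rw [hDch]; simp, rfl⟩
      · rw [not_compatible_iff]
        obtain ⟨x, hx⟩ := h1
        rw [Finset.mem_inter] at hx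
        obtain ⟨w, hw⟩ := h2
        rw [Finset.mem_inter] at hw
        refine ⟨⟨x, ?_⟩, ?_, ?_⟩
        · rw [Finset.mem_inter, Finset.mem_inter, Finset.mem_inter]
          exact ⟨⟨hx.1, hD1J hx.2⟩, hx.2, hCI hx.1⟩
        · rw [Finset.not_subset]
          refine ⟨w, Finset.mem_inter.2 ⟨hw.1, hD2J hw.2⟩, ?_⟩
          intro h
          have hwD1 : w ∈ D1 := (Finset.mem_inter.1 h).1
          have : w ∈ D1 ∩ D2 := Finset.mem_inter.2 ⟨hwD1, hw.2⟩
          rw [hDd] at this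
          simp at this
        · rw [Finset.not_subset]
          refine ⟨y, Finset.mem_inter.2 ⟨hyD, hyI⟩, ?_⟩
          intro h
          exact hyC (Finset.mem_inter.1 h).1
    · -- use D2
      refine ⟨D2 ∩ I, ?_, ?_⟩
      · rw [mem_restrictFam]
        exact ⟨⟨y, Finset.mem_inter.2 ⟨hyD, hyI⟩⟩, D2, by rw [hDch]; simp, rfl⟩
      · rw [not_compatible_iff]
        obtain ⟨x, hx⟩ := h2
        rw [Finset.mem_inter] at hx
        obtain ⟨w, hw⟩ := h1
        rw [Finset.mem_inter] at hw
        refine ⟨⟨x, ?_⟩, ?_, ?_⟩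
        · rw [Finset.mem_inter, Finset.mem_inter, Finset.mem_inter]
          exact ⟨⟨hx.1, hD2J hx.2⟩, hx.2, hCI hx.1⟩
        · rw [Finset.not_subset]
          refine ⟨w, Finset.mem_inter.2 ⟨hw.1, hD1J hw.2⟩, ?_⟩
          intro h
          have hwD2 : w ∈ D2 := (Finset.mem_inter.1 h).1
          have : w ∈ D1 ∩ D2 := Finset.mem_inter.2 ⟨hw.2, hwD2⟩
          rw [hDd] at this
          simp at this
        · rw [Finset.not_subset]
          refine ⟨y, Finset.mem_inter.2 ⟨hyD, hyI⟩, ?_⟩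
          intro h
          exact hyC (Finset.mem_inter.1 h).1

/-- Explicit value of η for two binary nodes. -/
lemma eta_eq {F G : Finset (Finset α)} {I J C1 C2 D1 D2 : Finset α}
    (hCch : children F I = {C1, C2}) (hCd : C1 ∩ C2 = ∅) (hCu : C1 ∪ C2 = I)
    (hDch : children G J = {D1, D2}) (hDd : D1 ∩ D2 = ∅) (hDu : D1 ∪ D2 = J) :
    eta F G I J =
      (if (C1 ∩ D1).Nonempty ∧ (C1 ∩ D2).Nonempty ∧ (C2 ∩ J).Nonempty then 1 else 0) +
      (if (C2 ∩ D1).Nonempty ∧ (C2 ∩ D2).Nonempty ∧ (C1 ∩ J).Nonempty then 1 else 0) := by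
  classical
  set P1 := (C1 ∩ D1).Nonempty ∧ (C1 ∩ D2).Nonempty ∧ (C2 ∩ J).Nonempty with hP1
  set P2 := (C2 ∩ D1).Nonempty ∧ (C2 ∩ D2).Nonempty ∧ (C1 ∩ J).Nonempty with hP2
  have hk1 : (∃ B ∈ restrictFam (children G J) I, ¬ Compatible (C1 ∩ J) B) ↔ P1 :=
    cross_iff hCu hCd hDch hDd hDu
  have hk2 : (∃ B ∈ restrictFam (children G J) I, ¬ Compatible (C2 ∩ J) B) ↔ P2 := by
    rw [hP2]
    exact cross_iff (by rw [Finset.union_comm]; exact hCu) (by rw [Finset.inter_comm]; exact hCd)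
      hDch hDd hDu
  have hP1ne : P1 → (C1 ∩ J).Nonempty := by
    rintro ⟨⟨x, hx⟩, -, -⟩
    rw [Finset.mem_inter] at hx
    exact ⟨x, Finset.mem_inter.2 ⟨hx.1, (hDu ▸ Finset.subset_union_left : D1 ⊆ J) hx.2⟩⟩
  have hP2ne : P2 → (C2 ∩ J).Nonempty := by
    rintro ⟨⟨x, hx⟩, -, -⟩
    rw [Finset.mem_inter] at hx
    exact ⟨x, Finset.mem_inter.2 ⟨hx.1, (hDu ▸ Finset.subset_union_left : D1 ⊆ J) hx.2⟩⟩
  have hmem : ∀ A, (A ∈ (restrictFam (children F I) J).filter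
      (fun A => ∃ B ∈ restrictFam (children G J) I, ¬ Compatible A B)) ↔
      ((A = C1 ∩ J ∧ P1) ∨ (A = C2 ∩ J ∧ P2)) := by
    intro A
    rw [Finset.mem_filter, mem_restrictFam, hCch]
    constructor
    · rintro ⟨⟨hAne, C, hC, rfl⟩, hQ⟩
      rcases Finset.mem_insert.1 hC with rfl | hC'
      · exact Or.inl ⟨rfl, hk1.1 hQ⟩
      · rw [Finset.mem_singleton] at hC'
        subst hC'
        exact Or.inr ⟨rfl, hk2.1 hQ⟩
    · rintro (⟨rfl, hp⟩ | ⟨rfl, hp⟩)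
      · exact ⟨⟨hP1ne hp, C1, by simp, rfl⟩, hk1.2 hp⟩
      · exact ⟨⟨hP2ne hp, C2, by simp, rfl⟩, hk2.2 hp⟩
  unfold eta
  have hset : (restrictFam (children F I) J).filter
      (fun A => ∃ B ∈ restrictFam (children G J) I, ¬ Compatible A B) =
      (if P1 then {C1 ∩ J} else ∅) ∪ (if P2 then {C2 ∩ J} else ∅) := by
    ext A
    rw [hmem, Finset.mem_union]
    constructor
    · rintro (⟨rfl, hp⟩ | ⟨rfl, hp⟩)
      · left; rw [if_pos hp]; exact Finset.mem_singleton_self _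
      · right; rw [if_pos hp]; exact Finset.mem_singleton_self _
    · rintro (hA | hA)
      · by_cases h1 : P1
        · rw [if_pos h1] at hA
          exact Or.inl ⟨Finset.mem_singleton.1 hA, h1⟩
        · rw [if_neg h1] at hA; simp at hA
      · by_cases h2 : P2
        · rw [if_pos h2] at hA
          exact Or.inr ⟨Finset.mem_singleton.1 hA, h2⟩
        · rw [if_neg h2] at hA; simp at hA
  rw [hset]
  have hnemix : P1 → P2 → C1 ∩ J ≠ C2 ∩ J := by
    intro h1 _ heq
    obtain ⟨x, hx⟩ := hP1ne h1
    have hx2 : x ∈ C2 ∩ J := heq ▸ hx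
    rw [Finset.mem_inter] at hx hx2
    have : x ∈ C1 ∩ C2 := Finset.mem_inter.2 ⟨hx.1, hx2.1⟩
    rw [hCd] at this
    simp at this
  show Finset.card ((if P1 then ({C1 ∩ J} : Finset (Finset α)) else ∅) ∪
      if P2 then {C2 ∩ J} else ∅) = (if P1 then 1 else 0) + (if P2 then 1 else 0)
  by_cases h1 : P1 <;> by_cases h2 : P2
  · rw [if_pos h1, if_pos h2, if_pos h1, if_pos h2]
    have hu : ({C1 ∩ J} : Finset (Finset α)) ∪ {C2 ∩ J} = {C1 ∩ J, C2 ∩ J} := by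
      ext x; simp
    rw [hu, Finset.card_pair (hnemix h1 h2)]
  · rw [if_pos h1, if_neg h2, if_pos h1, if_neg h2, Finset.union_empty, Finset.card_singleton]
  · rw [if_neg h1, if_pos h2, if_neg h1, if_pos h2, Finset.empty_union, Finset.card_singleton]
  · rw [if_neg h1, if_neg h2, if_neg h1, if_neg h2, Finset.union_empty, Finset.card_empty]

/-! ### Counting crossings along a tree -/

/-- The split at `J` separates `A`. -/
def Xsep (G : Finset (Finset α)) (A J : Finset α) : Prop :=
  ∃ D ∈ children G J, (A ∩ D).Nonempty ∧ (A ∩ (J \ D)).Nonempty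

lemma xsep_iff {G : Finset (Finset α)} {A J D1 D2 : Finset α}
    (hDch : children G J = {D1, D2}) (hDd : D1 ∩ D2 = ∅) (hDu : D1 ∪ D2 = J) :
    Xsep G A J ↔ (A ∩ D1).Nonempty ∧ (A ∩ D2).Nonempty := by
  have hdisj : Disjoint D1 D2 := Finset.disjoint_iff_inter_eq_empty.2 hDd
  have h1 : J \ D1 = D2 := by
    rw [← hDu, Finset.union_sdiff_cancel_left hdisj]
  have h2 : J \ D2 = D1 := by
    rw [← hDu, Finset.union_sdiff_cancel_right hdisj]
  constructor
  · rintro ⟨D, hD, ha, hb⟩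
    rw [hDch] at hD
    rcases Finset.mem_insert.1 hD with h | h
    · rw [h] at ha hb; rw [h1] at hb; exact ⟨ha, hb⟩
    · rw [Finset.mem_singleton] at h
      rw [h] at ha hb; rw [h2] at hb; exact ⟨hb, ha⟩
  · rintro ⟨ha, hb⟩
    refine ⟨D1, by rw [hDch]; simp, ha, ?_⟩
    rw [h1]; exact hb

lemma not_xsep_of_leaf {G : Finset (Finset α)} {A J : Finset α}
    (h : children G J = ∅) : ¬ Xsep G A J := by
  rintro ⟨D, hD, -⟩
  rw [h] at hD
  simp at hD

/-- A cluster strictly inside a binary node lies inside one of its children. -/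
lemma subset_child_of_ssubset {S : Finset α} {G : Finset (Finset α)} (hG : IsHierarchy S G)
    {K D1 D2 J : Finset α} (hDch : children G K = {D1, D2}) (hDu : D1 ∪ D2 = K)
    (hJ : J ∈ G) (hJK : J ⊆ K) (hne : J ≠ K) : J ⊆ D1 ∨ J ⊆ D2 := by
  have hD1 : D1 ∈ children G K := by rw [hDch]; simp
  rw [mem_children_iff] at hD1
  rcases hG.2.1 J hJ D1 hD1.1 with h | h | h
  · right
    intro x hx
    have hxK : x ∈ D1 ∪ D2 := hDu ▸ hJK hx
    rcases Finset.mem_union.1 hxK with hx1 | hx2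
    · exfalso
      have : x ∈ J ∩ D1 := Finset.mem_inter.2 ⟨hx, hx1⟩
      rw [h] at this
      simp at this
    · exact hx2
  · exact Or.inl h
  · rcases eq_or_ne D1 J with heq | hne2
    · exact Or.inl (heq ▸ Finset.Subset.refl J)
    · exfalso
      have hss : D1 ⊂ J := Finset.ssubset_iff_subset_ne.2 ⟨h, hne2⟩
      have := hD1.2.2.2 J hJ hss
      exact hne (Finset.Subset.antisymm hJK this)

/-- Main counting lemma: clusters of `G` whose split separates `A` and lying inside `K`
number at most `|A ∩ K| - 1`. -/
lemma count_le {S : Finset α} {G : Finset (Finset α)} (hG : Nondeg S G)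
    (A : Finset α) (Q : Finset α → Prop) (hQ : ∀ J ∈ G, Q J → Xsep G A J) :
    ∀ m : ℕ, ∀ K ∈ G, K.card ≤ m →
      (G.filter (fun J => J ⊆ K ∧ Q J)).card ≤ (A ∩ K).card - 1 := by
  classical
  intro m
  induction m with
  | zero =>
    intro K hK hc
    have := Finset.card_pos.2 (hG.1.1 K hK).2
    omega
  | succ m ih =>
    intro K hK hc
    by_cases h1 : K.card ≤ 1
    · have hcard1 : K.card = 1 := by
        have := Finset.card_pos.2 (hG.1.1 K hK).2
        omega
      have hempty : (G.filter (fun J => J ⊆ K ∧ Q J)) = ∅ := by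
        rw [Finset.filter_eq_empty_iff]
        rintro J hJ ⟨hJK, hQJ⟩
        have hJne := Finset.card_pos.2 (hG.1.1 J hJ).2
        have hJeq : J = K := Finset.eq_of_subset_of_card_le hJK (by omega)
        have hx := hQ J hJ hQJ
        rw [hJeq] at hx
        exact not_xsep_of_leaf (children_singleton_empty hG.1 hcard1) hx
      rw [hempty]
      simp
    · push_neg at h1
      obtain ⟨D1, D2, hDch, hDne, hDd, hDu⟩ := children_pair hG hK h1
      have hD1m : D1 ∈ children G K := by rw [hDch]; simp
      have hD2m : D2 ∈ children G K := by rw [hDch]; simp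
      rw [mem_children_iff] at hD1m hD2m
      have hD1c : D1.card ≤ m := by
        have := Finset.card_lt_card hD1m.2.2.1
        omega
      have hD2c : D2.card ≤ m := by
        have := Finset.card_lt_card hD2m.2.2.1
        omega
      have hb1 := ih D1 hD1m.1 hD1c
      have hb2 := ih D2 hD2m.1 hD2c
      have hkey : (A ∩ K).card = (A ∩ D1).card + (A ∩ D2).card := by
        have hdisj : Disjoint (A ∩ D1) (A ∩ D2) := by
          rw [Finset.disjoint_left]
          intro x hx hx'
          have : x ∈ D1 ∩ D2 := Finset.mem_inter.2
            ⟨(Finset.mem_inter.1 hx).2, (Finset.mem_inter.1 hx').2⟩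
          rw [hDd] at this
          simp at this
        rw [← Finset.card_union_of_disjoint hdisj, ← Finset.inter_union_distrib_left, hDu]
      by_cases hQK : Q K
      · have hsub : G.filter (fun J => J ⊆ K ∧ Q J) ⊆
            ((G.filter (fun J => J ⊆ D1 ∧ Q J)) ∪ (G.filter (fun J => J ⊆ D2 ∧ Q J))) ∪ {K} := by
          intro J hJ
          rw [Finset.mem_filter] at hJ
          rcases eq_or_ne J K with rfl | hne
          · exact Finset.mem_union_right _ (Finset.mem_singleton_self J)
          · rcases subset_child_of_ssubset hG.1 hDch hDu hJ.1 hJ.2.1 hne with h | h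
            · exact Finset.mem_union_left _ (Finset.mem_union_left _
                (Finset.mem_filter.2 ⟨hJ.1, h, hJ.2.2⟩))
            · exact Finset.mem_union_left _ (Finset.mem_union_right _
                (Finset.mem_filter.2 ⟨hJ.1, h, hJ.2.2⟩))
        have hle := Finset.card_le_card hsub
        have hle2 := Finset.card_union_le
          ((G.filter (fun J => J ⊆ D1 ∧ Q J)) ∪ (G.filter (fun J => J ⊆ D2 ∧ Q J)))
          ({K} : Finset (Finset α))
        have hle3 := Finset.card_union_le (G.filter (fun J => J ⊆ D1 ∧ Q J))
          (G.filter (fun J => J ⊆ D2 ∧ Q J))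
        have hXK := hQ K hK hQK
        rw [xsep_iff hDch hDd hDu] at hXK
        have ha1 : 1 ≤ (A ∩ D1).card := Finset.card_pos.2 hXK.1
        have ha2 : 1 ≤ (A ∩ D2).card := Finset.card_pos.2 hXK.2
        have hsK : ({K} : Finset (Finset α)).card = 1 := Finset.card_singleton K
        omega
      · have hsub : G.filter (fun J => J ⊆ K ∧ Q J) ⊆
            (G.filter (fun J => J ⊆ D1 ∧ Q J)) ∪ (G.filter (fun J => J ⊆ D2 ∧ Q J)) := by
          intro J hJ
          rw [Finset.mem_filter] at hJ
          rcases eq_or_ne J K with rfl | hne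
          · exact absurd hJ.2.2 hQK
          · rcases subset_child_of_ssubset hG.1 hDch hDu hJ.1 hJ.2.1 hne with h | h
            · exact Finset.mem_union_left _ (Finset.mem_filter.2 ⟨hJ.1, h, hJ.2.2⟩)
            · exact Finset.mem_union_right _ (Finset.mem_filter.2 ⟨hJ.1, h, hJ.2.2⟩)
        have hle := Finset.card_le_card hsub
        have hle3 := Finset.card_union_le (G.filter (fun J => J ⊆ D1 ∧ Q J))
          (G.filter (fun J => J ⊆ D2 ∧ Q J))
        omega

/-! ### Per-node bound and the tree sum -/

/-- The predicate whose count we bound: the split at `J` separates `A`, and `J` meets `B`. -/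
def PPred (G : Finset (Finset α)) (A B J : Finset α) : Prop :=
  Xsep G A J ∧ (B ∩ J).Nonempty

lemma sum_union_le' {β : Type*} [DecidableEq β] (s t : Finset β) (f : β → ℕ) :
    ∑ i ∈ s ∪ t, f i ≤ ∑ i ∈ s, f i + ∑ i ∈ t, f i := by
  have := Finset.sum_union_inter (s₁ := s) (s₂ := t) (f := f)
  omega

/-- Sum-of-indicator version of the counting lemma. -/
lemma sum_indicator_le {S : Finset α} {G : Finset (Finset α)} (hG : Nondeg S G)
    {A : Finset α} (hAS : A ⊆ S) (P : Finset α → Prop) [DecidablePred P]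
    (hP : ∀ J ∈ G, P J → Xsep G A J) :
    ∑ J ∈ G, (if P J then (1 : ℕ) else 0) ≤ A.card - 1 := by
  classical
  have h1 : ∑ J ∈ G, (if P J then (1 : ℕ) else 0) = (G.filter P).card :=
    (Finset.card_filter _ _).symm
  have h2 := count_le hG A P hP S.card S hG.1.2.2.1 le_rfl
  rw [Finset.filter_congr_decidable] at h2
  have h4 : G.filter P ⊆ G.filter (fun J => J ⊆ S ∧ P J) := by
    intro J hJ
    simp only [Finset.mem_filter] at hJ ⊢
    exact ⟨hJ.1, (hG.1.1 J hJ.1).1, hJ.2⟩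
  have h5 := le_trans (Finset.card_le_card h4) h2
  rw [Finset.inter_eq_left.2 hAS] at h5
  rw [h1]
  exact h5

lemma node_bound {S : Finset α} {F G : Finset (Finset α)} (hF : Nondeg S F) (hG : Nondeg S G)
    {I C1 C2 : Finset α} (hI : I ∈ F)
    (hch : children F I = {C1, C2}) (hd : C1 ∩ C2 = ∅) (hu : C1 ∪ C2 = I) :
    ∑ J ∈ G, (eta F G I J ^ 2 + eta F G I J) ≤
      2 * ((C1.card - 1) + (C2.card - 1) + (C1.card - 1) * (C2.card - 1)) := by
  classical
  have hC1F : C1 ∈ F := (mem_children_iff.1 (by rw [hch]; simp : C1 ∈ children F I)).1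
  have hC2F : C2 ∈ F := (mem_children_iff.1 (by rw [hch]; simp : C2 ∈ children F I)).1
  have hC1S : C1 ⊆ S := (hF.1.1 C1 hC1F).1
  have hC2S : C2 ⊆ S := (hF.1.1 C2 hC2F).1
  -- pointwise identity
  have hpt : ∀ J ∈ G, eta F G I J ^ 2 + eta F G I J =
      2 * ((if PPred G C1 C2 J then 1 else 0) + (if PPred G C2 C1 J then 1 else 0)
        + (if PPred G C1 C2 J ∧ PPred G C2 C1 J then 1 else 0)) := by
    intro J hJ
    by_cases h2 : 2 ≤ J.card
    · obtain ⟨D1, D2, hDch, hDne, hDd, hDu⟩ := children_pair hG hJ h2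
      have e1 : PPred G C1 C2 J ↔
          ((C1 ∩ D1).Nonempty ∧ (C1 ∩ D2).Nonempty ∧ (C2 ∩ J).Nonempty) := by
        unfold PPred
        rw [xsep_iff hDch hDd hDu]
        tauto
      have e2 : PPred G C2 C1 J ↔
          ((C2 ∩ D1).Nonempty ∧ (C2 ∩ D2).Nonempty ∧ (C1 ∩ J).Nonempty) := by
        unfold PPred
        rw [xsep_iff hDch hDd hDu]
        tauto
      rw [eta_eq hch hd hu hDch hDd hDu]
      by_cases q1 : ((C1 ∩ D1).Nonempty ∧ (C1 ∩ D2).Nonempty ∧ (C2 ∩ J).Nonempty) <;>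
        by_cases q2 : ((C2 ∩ D1).Nonempty ∧ (C2 ∩ D2).Nonempty ∧ (C1 ∩ J).Nonempty) <;>
        simp [e1, e2, q1, q2]
    · have hcard1 : J.card = 1 := by
        have := Finset.card_pos.2 (hG.1.1 J hJ).2
        omega
      have hleaf := children_singleton_empty hG.1 hcard1
      have hns1 : ¬ PPred G C1 C2 J := fun h => not_xsep_of_leaf hleaf h.1
      have hns2 : ¬ PPred G C2 C1 J := fun h => not_xsep_of_leaf hleaf h.1
      rw [eta_zero_right hleaf]
      simp [hns1, hns2]
  rw [Finset.sum_congr rfl hpt, ← Finset.mul_sum]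
  apply Nat.mul_le_mul_left
  rw [Finset.sum_add_distrib, Finset.sum_add_distrib]
  have hb1 : ∑ J ∈ G, (if PPred G C1 C2 J then (1:ℕ) else 0) ≤ C1.card - 1 :=
    sum_indicator_le hG hC1S _ (fun J _ h => h.1)
  have hb2 : ∑ J ∈ G, (if PPred G C2 C1 J then (1:ℕ) else 0) ≤ C2.card - 1 :=
    sum_indicator_le hG hC2S _ (fun J _ h => h.1)
  have hbm1 : ∑ J ∈ G, (if PPred G C1 C2 J ∧ PPred G C2 C1 J then (1:ℕ) else 0) ≤
      C1.card - 1 :=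
    sum_indicator_le hG hC1S _ (fun J _ h => h.1.1)
  have hbm2 : ∑ J ∈ G, (if PPred G C1 C2 J ∧ PPred G C2 C1 J then (1:ℕ) else 0) ≤
      C2.card - 1 :=
    sum_indicator_le hG hC2S _ (fun J _ h => h.2.1)
  have hbm : ∑ J ∈ G, (if PPred G C1 C2 J ∧ PPred G C2 C1 J then (1:ℕ) else 0) ≤
      (C1.card - 1) * (C2.card - 1) := by
    rcases Nat.eq_zero_or_pos (C2.card - 1) with h | h
    · omega
    · exact le_trans hbm1 (Nat.le_mul_of_pos_right _ h)
  omega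

lemma arith_key (p q : ℕ) :
    p * (p - 1) + q * (q - 1) + 2 * (p + q + p * q) = (p + q + 1) * (p + q) := by
  rcases Nat.eq_zero_or_pos p with hp | hp
  · subst hp
    rcases Nat.eq_zero_or_pos q with hq | hq
    · subst hq; rfl
    · obtain ⟨b, rfl⟩ : ∃ b, q = b + 1 := ⟨q - 1, by omega⟩
      simp only [Nat.add_sub_cancel]
      ring
  · obtain ⟨a, rfl⟩ : ∃ a, p = a + 1 := ⟨p - 1, by omega⟩
    rcases Nat.eq_zero_or_pos q with hq | hq
    · subst hq
      simp only [Nat.add_sub_cancel]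
      ring
    · obtain ⟨b, rfl⟩ : ∃ b, q = b + 1 := ⟨q - 1, by omega⟩
      simp only [Nat.add_sub_cancel]
      ring

/-- Tree-sum bound: total contribution of clusters inside `K`. -/
lemma tree_sum_bound {S : Finset α} {F G : Finset (Finset α)}
    (hF : Nondeg S F) (hG : Nondeg S G) :
    ∀ m : ℕ, ∀ K ∈ F, K.card ≤ m →
      ∑ I ∈ F.filter (· ⊆ K), ∑ J ∈ G, (eta F G I J ^ 2 + eta F G I J) ≤
        (K.card - 1) * (K.card - 2) := by
  classical
  intro m
  induction m with
  | zero =>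
    intro K hK hc
    have := Finset.card_pos.2 (hF.1.1 K hK).2
    omega
  | succ m ih =>
    intro K hK hc
    by_cases h1 : K.card ≤ 1
    · have hcard1 : K.card = 1 := by
        have := Finset.card_pos.2 (hF.1.1 K hK).2
        omega
      have hset : F.filter (· ⊆ K) = {K} := by
        ext I
        rw [Finset.mem_filter, Finset.mem_singleton]
        constructor
        · rintro ⟨hIF, hIK⟩
          have := Finset.card_pos.2 (hF.1.1 I hIF).2
          exact Finset.eq_of_subset_of_card_le hIK (by omega)
        · intro h
          rw [h]
          exact ⟨hK, Finset.Subset.refl K⟩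
      rw [hset, Finset.sum_singleton]
      have hz : ∀ J ∈ G, eta F G K J ^ 2 + eta F G K J = 0 := by
        intro J hJ
        rw [eta_zero_left (children_singleton_empty hF.1 hcard1)]
        norm_num
      rw [Finset.sum_congr rfl hz]
      simp
    · push_neg at h1
      obtain ⟨C1, C2, hCch, hCne, hCd, hCu⟩ := children_pair hF hK h1
      have hC1m : C1 ∈ children F K := by rw [hCch]; simp
      have hC2m : C2 ∈ children F K := by rw [hCch]; simp
      rw [mem_children_iff] at hC1m hC2m
      have hC1c : C1.card ≤ m := by
        have := Finset.card_lt_card hC1m.2.2.1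
        omega
      have hC2c : C2.card ≤ m := by
        have := Finset.card_lt_card hC2m.2.2.1
        omega
      have hb1 := ih C1 hC1m.1 hC1c
      have hb2 := ih C2 hC2m.1 hC2c
      have hbK := node_bound hF hG hK hCch hCd hCu
      have hsub : F.filter (· ⊆ K) ⊆
          ((F.filter (· ⊆ C1)) ∪ (F.filter (· ⊆ C2))) ∪ {K} := by
        intro I hI
        rw [Finset.mem_filter] at hI
        rcases eq_or_ne I K with rfl | hne
        · exact Finset.mem_union_right _ (Finset.mem_singleton_self I)
        · rcases subset_child_of_ssubset hF.1 hCch hCu hI.1 hI.2 hne with h | h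
          · exact Finset.mem_union_left _ (Finset.mem_union_left _
              (Finset.mem_filter.2 ⟨hI.1, h⟩))
          · exact Finset.mem_union_left _ (Finset.mem_union_right _
              (Finset.mem_filter.2 ⟨hI.1, h⟩))
      set f : Finset α → ℕ := fun I => ∑ J ∈ G, (eta F G I J ^ 2 + eta F G I J) with hf
      have hle : ∑ I ∈ F.filter (· ⊆ K), f I ≤
          ∑ I ∈ (F.filter (· ⊆ C1)), f I + ∑ I ∈ (F.filter (· ⊆ C2)), f I + f K := by
        have t1 : ∑ I ∈ F.filter (· ⊆ K), f I ≤
            ∑ I ∈ ((F.filter (· ⊆ C1)) ∪ (F.filter (· ⊆ C2))) ∪ {K}, f I :=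
          Finset.sum_le_sum_of_subset hsub
        have t2 := sum_union_le' ((F.filter (· ⊆ C1)) ∪ (F.filter (· ⊆ C2))) {K} f
        have t3 := sum_union_le' (F.filter (· ⊆ C1)) (F.filter (· ⊆ C2)) f
        have t4 : ∑ I ∈ ({K} : Finset (Finset α)), f I = f K := Finset.sum_singleton _ _
        omega
      have hc1pos : 1 ≤ C1.card := Finset.card_pos.2 (hF.1.1 C1 hC1m.1).2
      have hc2pos : 1 ≤ C2.card := Finset.card_pos.2 (hF.1.1 C2 hC2m.1).2
      have hcardK : K.card = C1.card + C2.card := by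
        have hdisj : Disjoint C1 C2 := Finset.disjoint_iff_inter_eq_empty.2 hCd
        rw [← hCu, Finset.card_union_of_disjoint hdisj]
      have hfinal : (C1.card - 1) * (C1.card - 2) + (C2.card - 1) * (C2.card - 2)
          + 2 * ((C1.card - 1) + (C2.card - 1) + (C1.card - 1) * (C2.card - 1))
          = (K.card - 1) * (K.card - 2) := by
        have e1 : K.card - 1 = (C1.card - 1) + (C2.card - 1) + 1 := by omega
        have e2 : K.card - 2 = (C1.card - 1) + (C2.card - 1) := by omega
        have e4 : C1.card - 2 = C1.card - 1 - 1 := by omega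
        have e5 : C2.card - 2 = C2.card - 1 - 1 := by omega
        rw [e1, e2, e4, e5]
        exact arith_key (C1.card - 1) (C2.card - 1)
      calc ∑ I ∈ F.filter (· ⊆ K), f I
          ≤ ∑ I ∈ (F.filter (· ⊆ C1)), f I + ∑ I ∈ (F.filter (· ⊆ C2)), f I + f K := hle
        _ ≤ (C1.card - 1) * (C1.card - 2) + (C2.card - 1) * (C2.card - 2)
            + 2 * ((C1.card - 1) + (C2.card - 1) + (C1.card - 1) * (C2.card - 1)) :=
            Nat.add_le_add (Nat.add_le_add hb1 hb2) hbK
        _ = (K.card - 1) * (K.card - 2) := hfinal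

/-- Upper bound for the navigation distance. -/
lemma dNav_le_bound {S : Finset α} {F G : Finset (Finset α)} (hn : 2 ≤ S.card)
    (hF : Nondeg S F) (hG : Nondeg S G) :
    dNav F G ≤ (1 / 2) * ((S.card : ℚ) - 1) * ((S.card : ℚ) - 2) := by
  classical
  have hfe : F.filter (· ⊆ S) = F := by
    apply Finset.filter_true_of_mem
    intro I hI
    exact (hF.1.1 I hI).1
  have hT : ∑ I ∈ F, ∑ J ∈ G, (eta F G I J ^ 2 + eta F G I J) ≤
      (S.card - 1) * (S.card - 2) := by
    have := tree_sum_bound hF hG S.card S hF.1.2.2.1 le_rfl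
    rwa [hfe] at this
  have hcastT : ((∑ I ∈ F, ∑ J ∈ G, (eta F G I J ^ 2 + eta F G I J) : ℕ) : ℚ) ≤
      ((S.card : ℚ) - 1) * ((S.card : ℚ) - 2) := by
    calc ((∑ I ∈ F, ∑ J ∈ G, (eta F G I J ^ 2 + eta F G I J) : ℕ) : ℚ)
        ≤ (((S.card - 1) * (S.card - 2) : ℕ) : ℚ) := by
          exact_mod_cast hT
      _ = ((S.card : ℚ) - 1) * ((S.card : ℚ) - 2) := by
          rw [Nat.cast_mul, Nat.cast_sub (by omega : 1 ≤ S.card),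
            Nat.cast_sub (by omega : 2 ≤ S.card)]
          norm_num
  have hdnav : dNav F G =
      ((∑ I ∈ F, ∑ J ∈ G, (eta F G I J ^ 2 + eta F G I J) : ℕ) : ℚ) / 2 := by
    unfold dNav theta
    push_cast
    rw [Finset.sum_div]
    apply Finset.sum_congr rfl
    intro I _
    rw [Finset.sum_div]
  rw [hdnav]
  linarith

/-! ### Caterpillar construction -/

/-- Prefix cluster `{c 0, …, c k}`. -/
def pref {n : ℕ} (c : Fin n → α) (k : ℕ) : Finset α :=
  (Finset.univ.filter (fun i : Fin n => (i : ℕ) ≤ k)).image c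

/-- The caterpillar hierarchy determined by the enumeration `c`. -/
def cat {n : ℕ} (c : Fin n → α) : Finset (Finset α) :=
  ((Finset.range n).image (pref c)) ∪ (Finset.univ.image (fun i : Fin n => ({c i} : Finset α)))

section Caterpillar

variable {n : ℕ} {c : Fin n → α}

lemma mem_pref {k : ℕ} {x : α} : x ∈ pref c k ↔ ∃ i : Fin n, (i : ℕ) ≤ k ∧ c i = x := by
  unfold pref
  simp [Finset.mem_image, Finset.mem_filter]

lemma c_mem_pref (hinj : Function.Injective c) {k : ℕ} {i : Fin n} : c i ∈ pref c k ↔ (i : ℕ) ≤ k := by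
  rw [mem_pref]
  constructor
  · rintro ⟨i', hi', he⟩
    rwa [← hinj he]
  · intro h
    exact ⟨i, h, rfl⟩

lemma card_pref (hinj : Function.Injective c) {k : ℕ} : (pref c k).card = min (k + 1) n := by
  unfold pref
  rw [Finset.card_image_of_injective _ hinj]
  rw [← Finset.card_image_of_injective _ (Fin.val_injective), ← Finset.card_range (min (k+1) n)]
  congr 1
  ext m
  simp only [Finset.mem_image, Finset.mem_filter, Finset.mem_univ, true_and, Finset.mem_range]
  constructor
  · rintro ⟨i, hi, rfl⟩
    have := i.2
    omega
  · intro hm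
    exact ⟨⟨m, by omega⟩, by simpa using (by omega : m ≤ k), rfl⟩

lemma card_pref_of_lt (hinj : Function.Injective c) {k : ℕ} (hk : k < n) : (pref c k).card = k + 1 := by
  rw [card_pref hinj]
  omega

lemma pref_mono {j k : ℕ} (h : j ≤ k) : pref c j ⊆ pref c k := by
  intro x hx
  rw [mem_pref] at hx ⊢
  obtain ⟨i, hi, rfl⟩ := hx
  exact ⟨i, le_trans hi h, rfl⟩

lemma pref_subset_iff (hinj : Function.Injective c) {j k : ℕ} (hj : j < n) : pref c j ⊆ pref c k ↔ j ≤ k := by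
  constructor
  · intro h
    have : c ⟨j, hj⟩ ∈ pref c k := h ((c_mem_pref hinj).2 (by simp))
    rw [c_mem_pref hinj] at this
    simpa using this
  · exact pref_mono

lemma pref_injective (hinj : Function.Injective c) {j k : ℕ} (hj : j < n) (hk : k < n) (h : pref c j = pref c k) : j = k := by
  have h1 := card_pref_of_lt hinj hj
  have h2 := card_pref_of_lt hinj hk
  rw [h, h2] at h1
  omega

lemma pref_top : pref c (n - 1) = Finset.univ.image c := by
  unfold pref
  congr 1
  rw [Finset.filter_true_of_mem]
  intro i _
  have := i.2
  omega

lemma pref_zero {i : Fin n} (hi : (i : ℕ) = 0) : pref c 0 = {c i} := by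
  ext x
  rw [mem_pref, Finset.mem_singleton]
  constructor
  · rintro ⟨i', hi', rfl⟩
    congr 1
    exact Fin.ext (by omega)
  · rintro rfl
    exact ⟨i, by omega, rfl⟩

lemma mem_cat {A : Finset α} :
    A ∈ cat c ↔ (∃ k < n, pref c k = A) ∨ (∃ i : Fin n, ({c i} : Finset α) = A) := by
  unfold cat
  simp [Finset.mem_union, Finset.mem_image, Finset.mem_range]

lemma pref_mem_cat {k : ℕ} (hk : k < n) : pref c k ∈ cat c :=
  mem_cat.2 (Or.inl ⟨k, hk, rfl⟩)

lemma single_mem_cat (i : Fin n) : ({c i} : Finset α) ∈ cat c :=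
  mem_cat.2 (Or.inr ⟨i, rfl⟩)

lemma cat_hierarchy (hinj : Function.Injective c) {S : Finset α} (hn : 1 ≤ n) (himg : Finset.univ.image c = S) :
    IsHierarchy S (cat c) := by
  refine ⟨?_, ?_, ?_, ?_⟩
  · intro A hA
    rw [mem_cat] at hA
    rcases hA with ⟨k, hk, rfl⟩ | ⟨i, rfl⟩
    · constructor
      · rw [← himg]
        unfold pref
        exact Finset.image_subset_image (Finset.filter_subset _ _)
      · refine ⟨c ⟨0, by omega⟩, ?_⟩
        rw [c_mem_pref hinj]
        simp
    · constructor
      · rw [← himg]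
        intro x hx
        rw [Finset.mem_singleton] at hx
        subst hx
        exact Finset.mem_image_of_mem c (Finset.mem_univ i)
      · exact ⟨c i, Finset.mem_singleton_self _⟩
  · intro A hA B hB
    rw [mem_cat] at hA hB
    rcases hA with ⟨k, hk, rfl⟩ | ⟨i, rfl⟩
    · rcases hB with ⟨k', hk', rfl⟩ | ⟨i, rfl⟩
      · rcases le_total k k' with h | h
        · exact Or.inr (Or.inl (pref_mono h))
        · exact Or.inr (Or.inr (pref_mono h))
      · exact compatible_singleton _ _
    · exact singleton_compatible _ _
  · rw [← himg, ← pref_top]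
    exact pref_mem_cat (by omega)
  · intro x hx
    rw [← himg] at hx
    obtain ⟨i, _, rfl⟩ := Finset.mem_image.1 hx
    exact single_mem_cat i

lemma cat_card (hinj : Function.Injective c) (hn : 1 ≤ n) : (cat c).card = 2 * n - 1 := by
  have hP : ((Finset.range n).image (pref c)).card = n := by
    rw [Finset.card_image_of_injOn, Finset.card_range]
    intro j hj k hk h
    exact pref_injective hinj (Finset.mem_range.1 hj) (Finset.mem_range.1 hk) h
  have hQ : (Finset.univ.image (fun i : Fin n => ({c i} : Finset α))).card = n := by
    rw [Finset.card_image_of_injective, Finset.card_univ, Fintype.card_fin]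
    intro a b h
    apply hinj
    rwa [Finset.singleton_inj] at h
  have hI : ((Finset.range n).image (pref c)) ∩
      (Finset.univ.image (fun i : Fin n => ({c i} : Finset α))) = {pref c 0} := by
    ext A
    rw [Finset.mem_inter, Finset.mem_singleton]
    constructor
    · rintro ⟨h1, h2⟩
      obtain ⟨k, hk, rfl⟩ := Finset.mem_image.1 h1
      rw [Finset.mem_range] at hk
      obtain ⟨i, _, hi⟩ := Finset.mem_image.1 h2
      have hc1 : (pref c k).card = 1 := by
        rw [← hi]
        exact Finset.card_singleton _
      rw [card_pref_of_lt hinj hk] at hc1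
      have : k = 0 := by omega
      rw [this]
    · intro h
      constructor
      · rw [h]
        exact Finset.mem_image_of_mem _ (Finset.mem_range.2 (by omega))
      · rw [h, pref_zero (i := ⟨0, by omega⟩) rfl]
        exact Finset.mem_image_of_mem _ (Finset.mem_univ _)
  have := Finset.card_union_add_card_inter ((Finset.range n).image (pref c))
    (Finset.univ.image (fun i : Fin n => ({c i} : Finset α)))
  unfold cat
  rw [hP, hQ, hI, Finset.card_singleton] at this
  omega

lemma cat_nondeg (hinj : Function.Injective c) {S : Finset α} (hn : 1 ≤ n) (himg : Finset.univ.image c = S) :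
    Nondeg S (cat c) := by
  refine ⟨cat_hierarchy hinj hn himg, ?_⟩
  rw [cat_card hinj hn, ← himg, Finset.card_image_of_injective _ hinj,
    Finset.card_univ, Fintype.card_fin]

end Caterpillar

section Caterpillar2

variable {n : ℕ} {c : Fin n → α}

lemma pref_ssubset (hinj : Function.Injective c) {j k : ℕ} (hj : j < n) (hk : k < n)
    (h : j < k) : pref c j ⊂ pref c k := by
  refine Finset.ssubset_iff_subset_ne.2 ⟨pref_mono (by omega), ?_⟩
  intro he
  have := pref_injective hinj hj hk he
  omega

lemma single_ssubset_pref (hinj : Function.Injective c) {k : ℕ} {i : Fin n}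
    (hik : (i : ℕ) ≤ k) (hk : 1 ≤ k) (hkn : k < n) : ({c i} : Finset α) ⊂ pref c k := by
  refine Finset.ssubset_iff_subset_ne.2 ⟨?_, ?_⟩
  · rw [Finset.singleton_subset_iff, c_mem_pref hinj]
    exact hik
  · intro he
    have : (pref c k).card = 1 := by rw [← he]; exact Finset.card_singleton _
    rw [card_pref_of_lt hinj hkn] at this
    omega

lemma not_ssubset_singleton {A : Finset α} {x : α} (hA : A.Nonempty) :
    ¬ A ⊂ ({x} : Finset α) := by
  intro h
  have h1 := Finset.card_lt_card h
  have h2 := Finset.card_pos.2 hA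
  rw [Finset.card_singleton] at h1
  omega

lemma cat_nonempty_mem (hinj : Function.Injective c) (hn : 1 ≤ n) {A : Finset α}
    (hA : A ∈ cat c) : A.Nonempty := by
  rw [mem_cat] at hA
  rcases hA with ⟨k, hk, rfl⟩ | ⟨i, rfl⟩
  · refine ⟨c ⟨0, by omega⟩, (c_mem_pref hinj).2 (by simp)⟩
  · exact ⟨c i, Finset.mem_singleton_self _⟩

lemma parent_pref (hinj : Function.Injective c) {k : ℕ} (hk1 : 1 ≤ k) (hk2 : k ≤ n - 1)
    (hn : 2 ≤ n) : IsParent (cat c) (pref c (k - 1)) (pref c k) := by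
  have hkn : k < n := by omega
  refine ⟨pref_mem_cat hkn, pref_ssubset hinj (by omega) hkn (by omega), ?_⟩
  intro Q hQ hssQ
  rw [mem_cat] at hQ
  rcases hQ with ⟨k', hk', rfl⟩ | ⟨i, rfl⟩
  · have hsub := hssQ.subset
    rw [pref_subset_iff hinj (by omega)] at hsub
    have hne : k - 1 ≠ k' := by
      intro he
      rw [he] at hssQ
      exact (ssubset_irrefl _) hssQ
    exact pref_mono (by omega)
  · exact absurd hssQ (not_ssubset_singleton ⟨c ⟨0, by omega⟩, (c_mem_pref hinj).2 (by simp)⟩)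

lemma parent_single (hinj : Function.Injective c) {k : ℕ} {i : Fin n} (hik : (i : ℕ) = k)
    (hk1 : 1 ≤ k) (hk2 : k ≤ n - 1) (hn : 2 ≤ n) :
    IsParent (cat c) ({c i} : Finset α) (pref c k) := by
  have hkn : k < n := by omega
  refine ⟨pref_mem_cat hkn, single_ssubset_pref hinj (by omega) hk1 hkn, ?_⟩
  intro Q hQ hssQ
  rw [mem_cat] at hQ
  rcases hQ with ⟨k', hk', rfl⟩ | ⟨i', rfl⟩
  · have hmem : c i ∈ pref c k' := hssQ.subset (Finset.mem_singleton_self _)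
    rw [c_mem_pref hinj, hik] at hmem
    exact pref_mono hmem
  · exact absurd hssQ (not_ssubset_singleton (Finset.singleton_nonempty _))

lemma cat_children (hinj : Function.Injective c) {k : ℕ} {i : Fin n} (hik : (i : ℕ) = k)
    (hk1 : 1 ≤ k) (hk2 : k ≤ n - 1) (hn : 2 ≤ n) :
    children (cat c) (pref c k) = {pref c (k - 1), ({c i} : Finset α)} := by
  have hkn : k < n := by omega
  ext C
  rw [mem_children_iff]
  constructor
  · rintro ⟨hC, hpar⟩
    rw [mem_cat] at hC
    rcases hC with ⟨k', hk', rfl⟩ | ⟨i', rfl⟩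
    · -- a prefix child must be pref (k-1)
      have hsub := hpar.2.1.subset
      rw [pref_subset_iff hinj (by omega)] at hsub
      have hne : k' ≠ k := by
        intro he
        rw [he] at hpar
        exact (ssubset_irrefl _) hpar.2.1
      have hk'k : k' < k := by omega
      have hQ : pref c k ⊆ pref c (k' + 1) :=
        hpar.2.2 (pref c (k' + 1)) (pref_mem_cat (by omega))
          (pref_ssubset hinj (by omega) (by omega) (by omega))
      rw [pref_subset_iff hinj (by omega)] at hQ
      have : k' = k - 1 := by omega
      rw [this]
      simp
    · -- a singleton child
      have hmem : c i' ∈ pref c k := hpar.2.1.subset (Finset.mem_singleton_self _)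
      rw [c_mem_pref hinj] at hmem
      by_cases hieq : (i' : ℕ) = k
      · have : i' = i := Fin.ext (by omega)
        rw [this]
        simp
      · -- i' < k : impossible unless k = 1 and i' = 0
        by_cases hi0 : 1 ≤ (i' : ℕ)
        · exfalso
          have hQ : pref c k ⊆ pref c (i' : ℕ) :=
            hpar.2.2 (pref c (i' : ℕ)) (pref_mem_cat (by omega))
              (single_ssubset_pref hinj le_rfl hi0 (by omega))
          rw [pref_subset_iff hinj (by omega)] at hQ
          omega
        · -- i' = 0
          have hi'0 : (i' : ℕ) = 0 := by omega
          have hQ : pref c k ⊆ pref c 1 :=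
            hpar.2.2 (pref c 1) (pref_mem_cat (by omega)) (by
              rw [← pref_zero hi'0]
              exact pref_ssubset hinj (by omega) (by omega) (by omega))
          rw [pref_subset_iff hinj (by omega)] at hQ
          have hk1' : k = 1 := by omega
          have : ({c i'} : Finset α) = pref c (k - 1) := by
            rw [hk1']
            norm_num
            exact (pref_zero hi'0).symm
          rw [this]
          simp
  · intro hC
    rcases Finset.mem_insert.1 hC with rfl | hC
    · exact ⟨pref_mem_cat (by omega), parent_pref hinj hk1 hk2 hn⟩
    · rw [Finset.mem_singleton] at hC
      subst hC
      exact ⟨single_mem_cat i, parent_single hinj hik hk1 hk2 hn⟩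

lemma pref_child_disj (hinj : Function.Injective c) {k : ℕ} {i : Fin n} (hik : (i : ℕ) = k)
    (hk1 : 1 ≤ k) : pref c (k - 1) ∩ ({c i} : Finset α) = ∅ := by
  rw [Finset.eq_empty_iff_forall_notMem]
  intro x hx
  rw [Finset.mem_inter, Finset.mem_singleton] at hx
  obtain ⟨h1, rfl⟩ := hx
  rw [c_mem_pref hinj] at h1
  omega

lemma pref_child_union (hinj : Function.Injective c) {k : ℕ} {i : Fin n} (hik : (i : ℕ) = k)
    (hk1 : 1 ≤ k) : pref c (k - 1) ∪ ({c i} : Finset α) = pref c k := by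
  ext x
  rw [Finset.mem_union, Finset.mem_singleton, mem_pref, mem_pref]
  constructor
  · rintro (⟨i', hi', rfl⟩ | rfl)
    · exact ⟨i', by omega, rfl⟩
    · exact ⟨i, by omega, rfl⟩
  · rintro ⟨i', hi', rfl⟩
    by_cases h : (i' : ℕ) ≤ k - 1
    · exact Or.inl ⟨i', h, rfl⟩
    · have : i' = i := Fin.ext (by omega)
      rw [this]
      exact Or.inr rfl

end Caterpillar2

section Caterpillar3

variable {n : ℕ} {c : Fin n → α}

lemma inter_singleton_nonempty {A : Finset α} {x : α} :
    (A ∩ ({x} : Finset α)).Nonempty ↔ x ∈ A := by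
  constructor
  · rintro ⟨y, hy⟩
    rw [Finset.mem_inter, Finset.mem_singleton] at hy
    exact hy.2 ▸ hy.1
  · intro h
    exact ⟨x, Finset.mem_inter.2 ⟨h, Finset.mem_singleton_self _⟩⟩

lemma mem_prefg (hinj : Function.Injective c) {b : ℕ} {x : α} :
    x ∈ pref (fun i : Fin n => c i.rev) b ↔ ∃ i : Fin n, n - 1 - (i : ℕ) ≤ b ∧ c i = x := by
  rw [mem_pref]
  constructor
  · rintro ⟨i, hi, rfl⟩
    exact ⟨i.rev, by rw [Fin.val_rev]; omega, rfl⟩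
  · rintro ⟨i, hi, rfl⟩
    refine ⟨i.rev, ?_, by rw [Fin.rev_rev]⟩
    rw [Fin.val_rev]
    have := i.2
    omega

lemma pref_prefg_nonempty (hinj : Function.Injective c) {a b : ℕ} (ha : a < n) (hb : b < n) :
    (pref c a ∩ pref (fun i : Fin n => c i.rev) b).Nonempty ↔ n - 1 - b ≤ a := by
  constructor
  · rintro ⟨x, hx⟩
    rw [Finset.mem_inter, mem_pref, mem_prefg hinj] at hx
    obtain ⟨⟨i, hi, rfl⟩, ⟨i', hi', he⟩⟩ := hx
    have : i' = i := hinj he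
    subst this
    omega
  · intro h
    refine ⟨c ⟨n - 1 - b, by omega⟩, Finset.mem_inter.2 ⟨?_, ?_⟩⟩
    · rw [c_mem_pref hinj]
      simpa using h
    · rw [mem_prefg hinj]
      exact ⟨⟨n - 1 - b, by omega⟩, by simp; omega, rfl⟩

lemma c_mem_prefg (hinj : Function.Injective c) {b : ℕ} {i : Fin n} :
    c i ∈ pref (fun i : Fin n => c i.rev) b ↔ n - 1 - (i : ℕ) ≤ b := by
  rw [mem_prefg hinj]
  constructor
  · rintro ⟨i', hi', he⟩
    have : i' = i := hinj he
    subst this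
    exact hi'
  · intro h
    exact ⟨i, h, rfl⟩

/-- The value of η between clusters of opposite caterpillars. -/
lemma eta_cat (hinj : Function.Injective c) (hn : 2 ≤ n) {k m : ℕ}
    (hk1 : 1 ≤ k) (hk2 : k ≤ n - 1) (hm1 : 1 ≤ m) (hm2 : m ≤ n - 1) :
    eta (cat c) (cat (fun i : Fin n => c i.rev)) (pref c k) (pref (fun i : Fin n => c i.rev) m)
      = if n + 1 ≤ k + m then 1 else 0 := by
  classical
  set g : Fin n → α := fun i : Fin n => c i.rev with hg
  have hginj : Function.Injective g := fun a b h => Fin.rev_injective (hinj h)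
  have hkn : k < n := by omega
  have hmn : m < n := by omega
  set ik : Fin n := ⟨k, hkn⟩ with hik
  set jm : Fin n := ⟨m, hmn⟩ with hjm
  have hCch := cat_children hinj (i := ik) rfl hk1 hk2 hn
  have hCd := pref_child_disj hinj (i := ik) rfl hk1
  have hCu := pref_child_union hinj (i := ik) rfl hk1
  have hDch := cat_children hginj (i := jm) rfl hm1 hm2 hn
  have hDd := pref_child_disj hginj (i := jm) rfl hm1
  have hDu := pref_child_union hginj (i := jm) rfl hm1
  rw [eta_eq hCch hCd hCu hDch hDd hDu]
  -- identify the six nonemptiness conditions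
  have hikval : (ik : ℕ) = k := rfl
  have hjmval : (jm : ℕ) = m := rfl
  have hgjm : g jm = c jm.rev := rfl
  have hrevval : (jm.rev : ℕ) = n - 1 - m := by
    rw [Fin.val_rev, hjmval]
    omega
  have h11 : (pref c (k - 1) ∩ pref g (m - 1)).Nonempty ↔ n - 1 - (m - 1) ≤ k - 1 :=
    pref_prefg_nonempty hinj (by omega) (by omega)
  have h12 : (pref c (k - 1) ∩ ({g jm} : Finset α)).Nonempty ↔ n - 1 - m ≤ k - 1 := by
    rw [inter_singleton_nonempty, hgjm, c_mem_pref hinj, hrevval]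
  have h13 : (({c ik} : Finset α) ∩ pref g m).Nonempty ↔ n - 1 - k ≤ m := by
    rw [Finset.inter_comm, inter_singleton_nonempty, c_mem_prefg hinj, hikval]
  have h14 : (({c ik} : Finset α) ∩ pref g (m - 1)).Nonempty ↔ n - 1 - k ≤ m - 1 := by
    rw [Finset.inter_comm, inter_singleton_nonempty, c_mem_prefg hinj, hikval]
  have h15 : (({c ik} : Finset α) ∩ ({g jm} : Finset α)).Nonempty ↔ n - 1 - m = k := by
    rw [inter_singleton_nonempty, Finset.mem_singleton]
    constructor
    · intro h
      have hv := congrArg Fin.val (hinj (hgjm ▸ h))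
      rw [hrevval, hikval] at hv
      exact hv
    · intro h
      rw [hgjm]
      congr 1
      exact Fin.ext (by rw [hrevval, hikval, h])
  have h16 : (pref c (k - 1) ∩ pref g m).Nonempty ↔ n - 1 - m ≤ k - 1 :=
    pref_prefg_nonempty hinj (by omega) (by omega)
  simp only [hikval, hjmval, h11, h12, h13, h14, h15, h16]
  have hq2 : ¬((n - 1 - k ≤ m - 1) ∧ (n - 1 - m = k) ∧ (n - 1 - m ≤ k - 1)) := by
    rintro ⟨a, b, -⟩
    omega
  by_cases hcase : n + 1 ≤ k + m
  · rw [if_pos hcase, if_pos ⟨by omega, by omega, by omega⟩, if_neg hq2]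
  · rw [if_neg hcase, if_neg (by rintro ⟨a, -, -⟩; omega), if_neg hq2]

end Caterpillar3

section Final

variable {n : ℕ} {c : Fin n → α}

lemma theta_zero : theta 0 = 0 := by
  unfold theta
  norm_num

/-- The navigation distance between the two opposite caterpillars. -/
lemma dNav_cat (hinj : Function.Injective c) (hn : 2 ≤ n) :
    dNav (cat c) (cat (fun i : Fin n => c i.rev)) =
      (1 / 2) * ((n : ℚ) - 1) * ((n : ℚ) - 2) := by
  classical
  set g : Fin n → α := fun i : Fin n => c i.rev with hg
  have hginj : Function.Injective g := fun a b h => Fin.rev_injective (hinj h)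
  have hFh : IsHierarchy (Finset.univ.image c) (cat c) :=
    cat_hierarchy hinj (by omega) rfl
  have hGh : IsHierarchy (Finset.univ.image g) (cat g) :=
    cat_hierarchy hginj (by omega) rfl
  -- inner sums
  have hinner : ∀ k : ℕ, 1 ≤ k → k ≤ n - 1 →
      ∑ J ∈ cat g, theta (eta (cat c) (cat g) (pref c k) J) = ((k - 1 : ℕ) : ℚ) := by
    intro k hk1 hk2
    have hvan : ∀ J ∈ cat g, theta (eta (cat c) (cat g) (pref c k) J) ≠ 0 → 2 ≤ J.card := by
      intro J hJ hne
      by_contra hcard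
      push_neg at hcard
      have h1 := Finset.card_pos.2 (cat_nonempty_mem hginj (by omega) hJ)
      have hc1 : J.card = 1 := by omega
      exact hne (by
        rw [eta_zero_right (children_singleton_empty hGh hc1)]
        exact theta_zero)
    rw [← Finset.sum_filter_of_ne hvan]
    have hfilter : (cat g).filter (fun A => 2 ≤ A.card) =
        (Finset.Icc 1 (n - 1)).image (pref g) := by
      ext A
      rw [Finset.mem_filter, Finset.mem_image]
      constructor
      · rintro ⟨hA, hcard⟩
        rw [mem_cat] at hA
        rcases hA with ⟨m, hm, rfl⟩ | ⟨i, rfl⟩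
        · refine ⟨m, Finset.mem_Icc.2 ⟨?_, by omega⟩, rfl⟩
          have := card_pref_of_lt hginj hm
          omega
        · rw [Finset.card_singleton] at hcard
          omega
      · rintro ⟨m, hm, rfl⟩
        rw [Finset.mem_Icc] at hm
        exact ⟨pref_mem_cat (by omega), by rw [card_pref_of_lt hginj (by omega)]; omega⟩
    rw [hfilter, Finset.sum_image (by
      intro a ha b hb h
      rw [Finset.mem_coe, Finset.mem_Icc] at ha hb
      exact pref_injective hginj (by omega) (by omega) h)]
    have hpw : ∀ m ∈ Finset.Icc 1 (n - 1),
        theta (eta (cat c) (cat g) (pref c k) (pref g m)) =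
          (if n + 1 ≤ k + m then (1 : ℚ) else 0) := by
      intro m hm
      rw [Finset.mem_Icc] at hm
      rw [eta_cat hinj hn hk1 hk2 hm.1 hm.2]
      by_cases hc : n + 1 ≤ k + m
      · rw [if_pos hc, if_pos hc]
        unfold theta
        norm_num
      · rw [if_neg hc, if_neg hc]
        exact theta_zero
    rw [Finset.sum_congr rfl hpw]
    have hb : ∑ m ∈ Finset.Icc 1 (n - 1), (if n + 1 ≤ k + m then (1 : ℚ) else 0) =
        ((∑ m ∈ Finset.Icc 1 (n - 1), (if n + 1 ≤ k + m then (1 : ℕ) else 0) : ℕ) : ℚ) := by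
      push_cast
      rfl
    rw [hb]
    have hc2 : ∑ m ∈ Finset.Icc 1 (n - 1), (if n + 1 ≤ k + m then (1 : ℕ) else 0) = k - 1 := by
      rw [← Finset.card_filter]
      have heq : (Finset.Icc 1 (n - 1)).filter (fun m => n + 1 ≤ k + m) =
          Finset.Icc (n + 1 - k) (n - 1) := by
        ext m
        rw [Finset.mem_filter, Finset.mem_Icc, Finset.mem_Icc]
        omega
      rw [heq, Nat.card_Icc]
      omega
    rw [hc2]
  -- outer sum
  unfold dNav
  have hvanF : ∀ I ∈ cat c, (∑ J ∈ cat g, theta (eta (cat c) (cat g) I J)) ≠ 0 →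
      2 ≤ I.card := by
    intro I hI hne
    by_contra hcard
    push_neg at hcard
    have h1 := Finset.card_pos.2 (cat_nonempty_mem hinj (by omega) hI)
    have hc1 : I.card = 1 := by omega
    apply hne
    apply Finset.sum_eq_zero
    intro J hJ
    rw [eta_zero_left (children_singleton_empty hFh hc1)]
    exact theta_zero
  rw [← Finset.sum_filter_of_ne hvanF]
  have hfilterF : (cat c).filter (fun A => 2 ≤ A.card) =
      (Finset.Icc 1 (n - 1)).image (pref c) := by
    ext A
    rw [Finset.mem_filter, Finset.mem_image]
    constructor
    · rintro ⟨hA, hcard⟩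
      rw [mem_cat] at hA
      rcases hA with ⟨m, hm, rfl⟩ | ⟨i, rfl⟩
      · refine ⟨m, Finset.mem_Icc.2 ⟨?_, by omega⟩, rfl⟩
        have := card_pref_of_lt hinj hm
        omega
      · rw [Finset.card_singleton] at hcard
        omega
    · rintro ⟨m, hm, rfl⟩
      rw [Finset.mem_Icc] at hm
      exact ⟨pref_mem_cat (by omega), by rw [card_pref_of_lt hinj (by omega)]; omega⟩
  rw [hfilterF, Finset.sum_image (by
    intro a ha b hb h
    rw [Finset.mem_coe, Finset.mem_Icc] at ha hb
    exact pref_injective hinj (by omega) (by omega) h)]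
  have hpw2 : ∀ k ∈ Finset.Icc 1 (n - 1),
      (∑ J ∈ cat g, theta (eta (cat c) (cat g) (pref c k) J)) = ((k - 1 : ℕ) : ℚ) := by
    intro k hk
    rw [Finset.mem_Icc] at hk
    exact hinner k hk.1 hk.2
  rw [Finset.sum_congr rfl hpw2]
  -- Gauss sum
  have hcast : ∑ k ∈ Finset.Icc 1 (n - 1), ((k - 1 : ℕ) : ℚ) =
      ((∑ k ∈ Finset.Icc 1 (n - 1), (k - 1) : ℕ) : ℚ) := by
    push_cast
    rfl
  rw [hcast]
  have hnat : (∑ k ∈ Finset.Icc 1 (n - 1), (k - 1)) * 2 = (n - 1) * (n - 2) := by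
    have h1 : Finset.Icc 1 (n - 1) = Finset.Ico 1 n := by
      rw [← Finset.Ico_add_one_right_eq_Icc]
      congr 1
      omega
    rw [h1, Finset.sum_Ico_eq_sum_range]
    have h2 : ∀ i ∈ Finset.range (n - 1), 1 + i - 1 = i := by
      intro i _
      omega
    rw [Finset.sum_congr rfl h2, Finset.sum_range_id_mul_two]
    congr 1
  have h3 : ((∑ k ∈ Finset.Icc 1 (n - 1), (k - 1) : ℕ) : ℚ) * 2 =
      ((n : ℚ) - 1) * ((n : ℚ) - 2) := by
    have := congrArg (fun t : ℕ => (t : ℚ)) hnat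
    push_cast [Nat.cast_sub (by omega : 1 ≤ n), Nat.cast_sub (by omega : 2 ≤ n)] at this
    linarith
  linarith

end Final

theorem dNav_diameter (S : Finset α) (hn : 2 ≤ S.card) :
    (∀ F G : Finset (Finset α), Nondeg S F → Nondeg S G →
      dNav F G ≤ (1 / 2) * ((S.card : ℚ) - 1) * ((S.card : ℚ) - 2)) ∧
    (∃ F G : Finset (Finset α), Nondeg S F ∧ Nondeg S G ∧
      dNav F G = (1 / 2) * ((S.card : ℚ) - 1) * ((S.card : ℚ) - 2)) := by
  constructor
  · intro F G hF hG
    exact dNav_le_bound hn hF hG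
  · set n := S.card with hn'
    have hn2 : 2 ≤ n := hn
    set f : Fin n → α := fun i => ((S.equivFin.symm i : {x // x ∈ S}) : α) with hf
    have hfinj : Function.Injective f := by
      intro a b h
      exact S.equivFin.symm.injective (Subtype.coe_injective h)
    have himgf : Finset.univ.image f = S := by
      ext x
      simp only [Finset.mem_image, Finset.mem_univ, true_and]
      constructor
      · rintro ⟨i, rfl⟩
        exact (S.equivFin.symm i).2
      · intro hx
        exact ⟨S.equivFin ⟨x, hx⟩, by simp [hf]⟩
    have hginj : Function.Injective (fun i : Fin n => f i.rev) :=
      fun a b h => Fin.rev_injective (hfinj h)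
    have himgg : Finset.univ.image (fun i : Fin n => f i.rev) = S := by
      rw [← himgf]
      ext x
      simp only [Finset.mem_image, Finset.mem_univ, true_and]
      constructor
      · rintro ⟨i, rfl⟩
        exact ⟨i.rev, rfl⟩
      · rintro ⟨i, rfl⟩
        exact ⟨i.rev, by rw [Fin.rev_rev]⟩
    exact ⟨cat f, cat (fun i : Fin n => f i.rev),
      cat_nondeg hfinj (by omega) himgf,
      cat_nondeg hginj (by omega) himgg,
      dNav_cat hfinj hn2⟩

end TreeDist
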